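/- For c > 0 and μ ∈ ℝ, define U_μ = [[sinh(μ/2), cosh(μ/2)·coth(c/2)], [−cosh(μ/2)·tanh(c/2), −sinh(μ/2)]] and S₁ = [[cosh c, cosh c + 1], [cosh c − 1, cosh c]]. Then det U_μ = 1 and U_μ · S₁ · U_μ⁻¹ = S₁⁻¹. -/

import Mathlib

open Real

noncomputable def cothR (x : ℝ) : ℝ := Real.cosh x / Real.sinh x

theorem stmt13 (c μ : ℝ) (hc : 0 < c) :
    let U : Matrix (Fin 2) (Fin 2) ℝ :=
      !![Real.sinh (μ / 2), Real.cosh (μ / 2) * cothR (c / 2);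
         -(Real.cosh (μ / 2) * Real.tanh (c / 2)), -Real.sinh (μ / 2)]
    let S₁ : Matrix (Fin 2) (Fin 2) ℝ :=
      !![Real.cosh c, Real.cosh c + 1; Real.cosh c - 1, Real.cosh c]
    U.det = 1 ∧ U * S₁ * U⁻¹ = S₁⁻¹ := by
  intro U S₁
  have hs0 : Real.sinh (c/2) ≠ 0 := ne_of_gt (Real.sinh_pos_iff.2 (by linarith))
  have hC0 : Real.cosh (c/2) ≠ 0 := ne_of_gt (Real.cosh_pos (c/2))
  have hpy : Real.cosh (c/2)^2 - Real.sinh (c/2)^2 = 1 := by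
    have := Real.cosh_sq_sub_sinh_sq (c/2); nlinarith [this]
  have hpy2 : Real.cosh (μ/2)^2 - Real.sinh (μ/2)^2 = 1 := by
    have := Real.cosh_sq_sub_sinh_sq (μ/2); nlinarith [this]
  have hcc : Real.cosh c = Real.cosh (c/2)^2 + Real.sinh (c/2)^2 := by
    have h : c = c/2 + c/2 := by ring
    rw [h, Real.cosh_add]; ring
  have hcp : Real.cosh c + 1 = 2 * Real.cosh (c/2)^2 := by rw [hcc]; linarith
  have hcm : Real.cosh c - 1 = 2 * Real.sinh (c/2)^2 := by rw [hcc]; linarith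
  have htanh : Real.tanh (c/2) = Real.sinh (c/2) / Real.cosh (c/2) :=
    Real.tanh_eq_sinh_div_cosh _
  have hdet : U.det = 1 := by
    simp only [U, Matrix.det_fin_two_of, cothR, htanh]
    field_simp
    linear_combination hpy2
  refine ⟨hdet, ?_⟩
  have hS₁inv : S₁⁻¹ =
      !![Real.cosh c, -(Real.cosh c + 1); -(Real.cosh c - 1), Real.cosh c] := by
    apply Matrix.inv_eq_right_inv
    ext i j
    fin_cases i <;> fin_cases j <;>
      · simp only [S₁, Matrix.mul_apply, Fin.sum_univ_two,
          Matrix.cons_val', Matrix.cons_val_zero, Matrix.cons_val_one, Matrix.head_cons,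
          Matrix.head_fin_const, Matrix.empty_val', Matrix.cons_val_fin_one, Matrix.of_apply,
          Matrix.one_apply]
        rw [hcp, hcm, hcc]
        simp
        nlinarith [hpy]
  have hkey : U * S₁ = S₁⁻¹ * U := by
    rw [hS₁inv]
    ext i j
    fin_cases i <;> fin_cases j <;>
      · simp only [U, S₁, Matrix.mul_apply, Fin.sum_univ_two, cothR, htanh,
          Matrix.cons_val', Matrix.cons_val_zero, Matrix.cons_val_one, Matrix.head_cons,
          Matrix.head_fin_const, Matrix.empty_val', Matrix.cons_val_fin_one, Matrix.of_apply,
          Fin.zero_eta, Fin.mk_one]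
        simp only [hcp, hcm]
        rw [hcc]
        field_simp <;> ring
  have hunit : IsUnit U.det := by rw [hdet]; exact isUnit_one
  calc U * S₁ * U⁻¹ = S₁⁻¹ * U * U⁻¹ := by rw [hkey]
    _ = S₁⁻¹ * (U * U⁻¹) := by rw [Matrix.mul_assoc]
    _ = S₁⁻¹ := by rw [Matrix.mul_nonsing_inv U hunit, Matrix.mul_one]
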